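/- (Foschi–Klainerman hyperbolic null symbol bound) For η, ξ ∈ ℝ² with η ≠ 0, ξ ≠ η, |η₁(ξ-η)₂ - η₂(ξ-η)₁| / (|η||ξ-η|) ≲ |ξ|^{1/2}(|ξ| - ||η| - |ξ-η||)^{1/2} / (|η|^{1/2}|ξ-η|^{1/2}), provided ||η| - |ξ-η|| ≤ |ξ| (i.e., in the hyperbolic regime where the right side is defined). -/

import Mathlib

set_option maxHeartbeats 800000


/-- Foschi–Klainerman hyperbolic null symbol bound: for η ≠ 0, ξ ≠ η in ℝ²
with ||η| - |ξ-η|| ≤ |ξ|,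
|η₁(ξ-η)₂ - η₂(ξ-η)₁|/(|η||ξ-η|)
  ≲ |ξ|^{1/2}(|ξ| - ||η|-|ξ-η||)^{1/2}/(|η|^{1/2}|ξ-η|^{1/2}). -/
theorem nullform_hyperbolic_bound :
    ∃ C : ℝ, 0 < C ∧ ∀ (η ξ : EuclideanSpace ℝ (Fin 2)), η ≠ 0 → ξ ≠ η →
      |‖η‖ - ‖ξ - η‖| ≤ ‖ξ‖ →
      |η 0 * (ξ - η) 1 - η 1 * (ξ - η) 0| / (‖η‖ * ‖ξ - η‖) ≤
        C * (Real.sqrt ‖ξ‖ * Real.sqrt (‖ξ‖ - |‖η‖ - ‖ξ - η‖|)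
          / (Real.sqrt ‖η‖ * Real.sqrt ‖ξ - η‖)) := by
  refine ⟨Real.sqrt 2, Real.sqrt_pos.mpr (by norm_num), ?_⟩
  intro η ξ hη hξη hd
  set ζ : EuclideanSpace ℝ (Fin 2) := ξ - η with hζ
  have hζ0 : ζ ≠ 0 := sub_ne_zero.mpr hξη
  set a := ‖η‖ with ha
  set b := ‖ζ‖ with hb
  set c := ‖ξ‖ with hc
  have ha0 : 0 < a := norm_pos_iff.mpr hη
  have hb0 : 0 < b := norm_pos_iff.mpr hζ0
  have hc0 : 0 ≤ c := norm_nonneg _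
  set d := |a - b| with hdd
  have hd0 : 0 ≤ d := abs_nonneg _
  have hd2 : d ^ 2 = (a - b) ^ 2 := sq_abs _
  -- inner product
  set p : ℝ := inner ℝ η ζ with hp
  have hcc : c ^ 2 = a ^ 2 + b ^ 2 + 2 * p := by
    have hξ : ξ = η + ζ := by simp [hζ]
    rw [hc, hξ, ha, hb, hp]
    rw [norm_add_sq_real]
    ring
  -- cross squared identity
  have hcross : (η 0 * ζ 1 - η 1 * ζ 0) ^ 2 = a ^ 2 * b ^ 2 - p ^ 2 := by
    have h1 : a ^ 2 = η 0 ^ 2 + η 1 ^ 2 := by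
      rw [ha, EuclideanSpace.norm_eq, Real.sq_sqrt (by positivity)]
      simp [Fin.sum_univ_two, sq_abs]
    have h2 : b ^ 2 = ζ 0 ^ 2 + ζ 1 ^ 2 := by
      rw [hb, EuclideanSpace.norm_eq, Real.sq_sqrt (by positivity)]
      simp [Fin.sum_univ_two, sq_abs]
    have h3 : p = η 0 * ζ 0 + η 1 * ζ 1 := by
      rw [hp]
      simp [PiLp.inner_apply, Fin.sum_univ_two, mul_comm]
    rw [h1, h2, h3]; ring
  -- key bound on cross squared
  have hkey : (η 0 * ζ 1 - η 1 * ζ 0) ^ 2 ≤ 2 * a * b * c * (c - d) := by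
    rw [hcross]
    have hpval : p = (c ^ 2 - a ^ 2 - b ^ 2) / 2 := by linarith
    have hid : ((a + b) ^ 2 - c ^ 2) * (c ^ 2 - d ^ 2) =
        4 * (a ^ 2 * b ^ 2 - p ^ 2) := by rw [hd2, hpval]; ring
    have hdc2 : d ^ 2 ≤ c ^ 2 := by nlinarith [hd, hd0]
    have hv : 0 ≤ c ^ 2 - d ^ 2 := by linarith
    have hu : (a + b) ^ 2 - c ^ 2 ≤ 4 * a * b := by nlinarith [hd2]
    have h2c : c ^ 2 - d ^ 2 ≤ 2 * c * (c - d) := by nlinarith [hd, hd0]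
    have hprod : ((a + b) ^ 2 - c ^ 2) * (c ^ 2 - d ^ 2) ≤
        (4 * a * b) * (2 * c * (c - d)) :=
      mul_le_mul hu h2c hv (by positivity)
    linarith [hprod, hid]
  -- from square bound to abs bound
  have habs : |η 0 * ζ 1 - η 1 * ζ 0| ≤ Real.sqrt (2 * a * b * c * (c - d)) := by
    rw [← Real.sqrt_sq_eq_abs]
    exact Real.sqrt_le_sqrt hkey
  have hsqrt_prod : Real.sqrt (2 * a * b * c * (c - d)) =
      Real.sqrt 2 * Real.sqrt a * Real.sqrt b * Real.sqrt c * Real.sqrt (c - d) := by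
    rw [Real.sqrt_mul (by positivity), Real.sqrt_mul (by positivity),
      Real.sqrt_mul (by positivity), Real.sqrt_mul (by norm_num)]
  have hsa : (0:ℝ) < Real.sqrt a := Real.sqrt_pos.mpr ha0
  have hsb : (0:ℝ) < Real.sqrt b := Real.sqrt_pos.mpr hb0
  have haeq : a = Real.sqrt a * Real.sqrt a := (Real.mul_self_sqrt ha0.le).symm
  have hbeq : b = Real.sqrt b * Real.sqrt b := (Real.mul_self_sqrt hb0.le).symm
  rw [div_le_iff₀ (by positivity)]
  calc |η 0 * ζ 1 - η 1 * ζ 0|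
      ≤ Real.sqrt 2 * Real.sqrt a * Real.sqrt b * Real.sqrt c * Real.sqrt (c - d) := by
        rw [← hsqrt_prod]; exact habs
    _ = Real.sqrt 2 * (Real.sqrt c * Real.sqrt (c - d) /
          (Real.sqrt a * Real.sqrt b)) * (a * b) := by
        have hA : Real.sqrt a * Real.sqrt a = a := Real.mul_self_sqrt ha0.le
        have hB : Real.sqrt b * Real.sqrt b = b := Real.mul_self_sqrt hb0.le
        field_simp
        linear_combination (Real.sqrt c * Real.sqrt (c - d) *
          (Real.sqrt b * Real.sqrt b)) * hA +
          (Real.sqrt c * Real.sqrt (c - d) * a) * hB
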